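/- Let K be ℝ or ℂ and let G be an abelian subgroup of S_n(K). Let u, v ∈ K^n with first coordinates u_1 ≠ 0 and v_1 ≠ 0, and let (B_m)_{m∈ℕ} be a sequence in G with lim_{m→∞} B_m u = v. Then there exist a G-invariant K-linear subspace H of K^n and a basis (u, w_1, …, w_p) of H whose first vector is u, such that: (i) for every B ∈ G, the matrix of the restriction of B to H in this basis is lower triangular with all its diagonal entries equal (i.e. lies in S_{p+1}(K)); (ii) the sequence of matrices of the restrictions of B_m to H in this basis is bounded. -/

import Mathlib

open Matrix Filter Topology

set_option maxHeartbeats 1000000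
set_option synthInstance.maxHeartbeats 200000

/-- `B` belongs to `S_N(K)`: lower triangular with all diagonal entries equal. -/
def IsSnMatrix {K : Type*} [Field K] {N : ℕ} (B : Matrix (Fin N) (Fin N) K) : Prop :=
  (∀ i j : Fin N, i < j → B i j = 0) ∧ (∀ i j : Fin N, B i i = B j j)

section Aux

variable (K : Type*) [Field K]

/-- The subspace of vectors whose first `k` coordinates vanish. -/
def ekSub (n k : ℕ) : Submodule K (Fin n → K) where
  carrier := {x | ∀ j : Fin n, (j : ℕ) < k → x j = 0}
  add_mem' := fun ha hb j hj => by simp [ha j hj, hb j hj]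
  zero_mem' := fun j _ => rfl
  smul_mem' := fun c x hx j hj => by simp [hx j hj]

variable {K}

lemma ekSub_antitone {n k l : ℕ} (h : k ≤ l) : ekSub K n l ≤ ekSub K n k :=
  fun x hx j hj => hx j (lt_of_lt_of_le hj h)

lemma ekSub_bot {n : ℕ} {x : Fin n → K} (hx : x ∈ ekSub K n n) : x = 0 :=
  funext fun j => hx j j.isLt

lemma ekSub_triangular {n : ℕ} {A : Matrix (Fin n) (Fin n) K} {lam : K}
    (hlow : ∀ i j : Fin n, i < j → A i j = 0) (hdiag : ∀ i, A i i = lam)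
    {k : ℕ} {x : Fin n → K} (hx : x ∈ ekSub K n k) :
    A.mulVec x - lam • x ∈ ekSub K n (k + 1) := by
  intro i hi
  have hsum : A.mulVec x i = lam * x i := by
    simp only [Matrix.mulVec, dotProduct]
    rw [Finset.sum_eq_single i]
    · rw [hdiag i]
    · intro j _ hji
      rcases lt_or_gt_of_ne hji with h | h
      · have hj : (j : ℕ) < k := by
          have h1 : (j : ℕ) < (i : ℕ) := h
          omega
        simp [hx j hj]
      · simp [hlow i j h]
    · intro h; exact absurd (Finset.mem_univ i) h
  simp [Pi.sub_apply, hsum]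

end Aux

/-- Let `K = ℝ` or `ℂ` and `G` an abelian subgroup of `S_n(K)`. For all `u, v ∈ Kⁿ` with
nonzero first coordinates and every sequence `(B_m)` in `G` with `lim B_m u = v`, there are a
`G`-invariant subspace `H ⊆ Kⁿ` and a basis `(u, w₁, …, w_p)` of `H` with first vector `u`
such that: (i) for every `A ∈ G` the matrix of the restriction of `A` to `H` in this basis is
lower triangular with equal diagonal entries (lies in `S_{p+1}(K)`); (ii) the sequence of the
matrices of the restrictions of `B_m` to `H` in this basis is bounded. -/
theorem exists_invariant_subspace_bounded {K : Type*} [RCLike K] (n : ℕ) (hn : 0 < n)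
    (G : Subgroup (Matrix.GeneralLinearGroup (Fin n) K))
    (hGcomm : ∀ A ∈ G, ∀ B ∈ G, A * B = B * A)
    (hS : ∀ B ∈ G, IsSnMatrix (B : Matrix (Fin n) (Fin n) K))
    (u v : Fin n → K) (hu : u ⟨0, hn⟩ ≠ 0) (hv : v ⟨0, hn⟩ ≠ 0)
    (B : ℕ → Matrix.GeneralLinearGroup (Fin n) K) (hB : ∀ m, B m ∈ G)
    (hlim : Tendsto (fun m => (B m : Matrix (Fin n) (Fin n) K).mulVec u) atTop (𝓝 v)) :
    ∃ (H : Submodule K (Fin n → K)) (p : ℕ) (b : Module.Basis (Fin (p + 1)) K H)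
      (hinv : ∀ A ∈ G, ∀ x ∈ H, (A : Matrix (Fin n) (Fin n) K).mulVec x ∈ H),
      ((b 0 : Fin n → K) = u) ∧
      (∀ A : Matrix.GeneralLinearGroup (Fin n) K, ∀ hA : A ∈ G,
        IsSnMatrix (LinearMap.toMatrix b b
          ((Matrix.mulVecLin (A : Matrix (Fin n) (Fin n) K)).restrict
            (fun x hx => hinv A hA x hx)))) ∧
      (∃ C : ℝ, ∀ m, ∀ i j : Fin (p + 1),
        ‖LinearMap.toMatrix b b
          ((Matrix.mulVecLin (B m : Matrix (Fin n) (Fin n) K)).restrict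
            (fun x hx => hinv (B m) (hB m) x hx)) i j‖ ≤ C) := by
  classical
  set i0 : Fin n := ⟨0, hn⟩ with hi0
  set Hs : Set (Fin n → K) :=
    {x | ∃ A ∈ G, x = (A : Matrix (Fin n) (Fin n) K).mulVec u} with hHs
  set H : Submodule K (Fin n → K) := Submodule.span K Hs with hH
  have huH : u ∈ H := Submodule.subset_span ⟨1, G.one_mem, by simp⟩
  -- invariance of H
  have hinv : ∀ A ∈ G, ∀ x ∈ H, (A : Matrix (Fin n) (Fin n) K).mulVec x ∈ H := by
    intro A hA x hx
    rw [hH] at hx ⊢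
    induction hx using Submodule.span_induction with
    | mem x hxs =>
      obtain ⟨C, hC, rfl⟩ := hxs
      refine Submodule.subset_span ⟨A * C, G.mul_mem hA hC, ?_⟩
      rw [Matrix.mulVec_mulVec]
      simp
    | zero => simpa using (Submodule.span K Hs).zero_mem
    | add x y _ _ hx hy =>
      rw [Matrix.mulVec_add]; exact (Submodule.span K Hs).add_mem hx hy
    | smul c x _ hx =>
      rw [Matrix.mulVec_smul]; exact (Submodule.span K Hs).smul_mem c hx
  -- the set of pivot degrees
  set D : Finset ℕ := (Finset.range n).filter
      (fun k => H ⊓ ekSub K n (k + 1) ≠ H ⊓ ekSub K n k) with hD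
  have hu1 : u ∉ ekSub K n 1 := fun h => hu (h i0 (by simp [hi0]))
  have h0D : (0 : ℕ) ∈ D := by
    rw [hD]
    refine Finset.mem_filter.mpr ⟨Finset.mem_range.mpr hn, fun heq => ?_⟩
    have hmem : u ∈ H ⊓ ekSub K n 1 := by
      rw [heq]; exact ⟨huH, fun j hj => absurd hj (by omega)⟩
    exact hu1 hmem.2
  have hDne : D.Nonempty := ⟨0, h0D⟩
  obtain ⟨p, hp⟩ : ∃ p, D.card = p + 1 :=
    ⟨D.card - 1, (Nat.succ_pred_eq_of_pos (Finset.card_pos.mpr hDne)).symm⟩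
  set e := D.orderIsoOfFin hp with he
  set d : Fin (p + 1) → ℕ := fun j => (e j : ℕ) with hd
  have hdmono : StrictMono d := fun a b hab => by
    exact Subtype.coe_lt_coe.mpr (e.strictMono hab)
  have hdD : ∀ j, d j ∈ D := fun j => (e j).2
  have hdn : ∀ j, d j < n := fun j => by
    have := hdD j; rw [hD] at this
    exact Finset.mem_range.mp (Finset.mem_filter.mp this).1
  have hdne : ∀ j, H ⊓ ekSub K n (d j + 1) ≠ H ⊓ ekSub K n (d j) := fun j => by
    have := hdD j; rw [hD] at this
    exact (Finset.mem_filter.mp this).2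
  have hd0 : d 0 = 0 := by
    have h1 : d (e.symm ⟨0, h0D⟩) = 0 := by
      show ((e (e.symm ⟨0, h0D⟩)) : ℕ) = 0
      rw [OrderIso.apply_symm_apply]
    have h2 : d 0 ≤ d (e.symm ⟨0, h0D⟩) := hdmono.monotone (Fin.zero_le _)
    omega
  -- choose echelon vectors
  have hWex : ∀ j : Fin (p + 1),
      ∃ x, x ∈ H ∧ x ∈ ekSub K n (d j) ∧ x ∉ ekSub K n (d j + 1) := by
    intro j
    have hle : H ⊓ ekSub K n (d j + 1) ≤ H ⊓ ekSub K n (d j) :=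
      inf_le_inf_left H (ekSub_antitone (Nat.le_succ _))
    obtain ⟨x, hx1, hx2⟩ := SetLike.exists_of_lt (lt_of_le_of_ne hle (hdne j))
    exact ⟨x, hx1.1, hx1.2, fun h => hx2 ⟨hx1.1, h⟩⟩
  set w : Fin (p + 1) → (Fin n → K) :=
    fun j => if j = 0 then u else (hWex j).choose with hwdef
  have hw : ∀ j, w j ∈ H ∧ w j ∈ ekSub K n (d j) ∧ w j ∉ ekSub K n (d j + 1) := by
    intro j
    by_cases hj : j = 0
    · subst hj
      simp only [hwdef, if_pos rfl]
      refine ⟨huH, ?_, ?_⟩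
      · rw [hd0]; exact fun i hi => absurd hi (by omega)
      · rw [hd0]; exact hu1
    · simp only [hwdef, if_neg hj]; exact (hWex j).choose_spec
  set fd : Fin (p + 1) → Fin n := fun j => ⟨d j, hdn j⟩ with hfd
  have hpivot : ∀ j, w j (fd j) ≠ 0 := by
    intro j hzero
    refine (hw j).2.2 (fun i hi => ?_)
    rcases Nat.lt_or_ge (i : ℕ) (d j) with h | h
    · exact (hw j).2.1 i h
    · have heq : i = fd j := Fin.ext (by simp [hfd]; omega)
      rw [heq]; exact hzero
  have hwEgt : ∀ {j i : Fin (p + 1)}, j < i → w i (fd j) = 0 := by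
    intro j i hji
    exact (hw i).2.1 (fd j) (hdmono hji)
  -- spanning property
  have hspan : ∀ t k, n - k ≤ t → ∀ x, x ∈ H → x ∈ ekSub K n k →
      x ∈ Submodule.span K (w '' {i | k ≤ d i}) := by
    intro t
    induction t with
    | zero =>
      intro k hk x hxH hxE
      have hx0 : x = 0 := ekSub_bot (ekSub_antitone (by omega) hxE)
      simp [hx0]
    | succ t ih =>
      intro k hk x hxH hxE
      by_cases hkn : n ≤ k
      · have hx0 : x = 0 := ekSub_bot (ekSub_antitone hkn hxE)
        simp [hx0]
      push_neg at hkn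
      have hmono : Submodule.span K (w '' {i | k + 1 ≤ d i}) ≤
          Submodule.span K (w '' {i | k ≤ d i}) :=
        Submodule.span_mono (Set.image_mono (fun i hi => le_trans (Nat.le_succ k) hi))
      by_cases hkD : k ∈ D
      · set j := e.symm ⟨k, hkD⟩ with hj
        have hdj : d j = k := by
          show ((e (e.symm ⟨k, hkD⟩)) : ℕ) = k
          rw [OrderIso.apply_symm_apply]
        set c := x (fd j) / w j (fd j) with hc
        have hy : x - c • w j ∈ ekSub K n (k + 1) := by
          intro i hi
          rcases Nat.lt_or_ge (i : ℕ) k with h | h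
          · have h1 := hxE i h
            have h2 := (hw j).2.1 i (by rw [hdj]; exact h)
            simp [h1, h2]
          · have heq : i = fd j := Fin.ext (by simp [hfd]; omega)
            subst heq
            simp only [Pi.sub_apply, Pi.smul_apply, smul_eq_mul, hc]
            rw [div_mul_cancel₀ _ (hpivot j), sub_self]
        have hyH : x - c • w j ∈ H := H.sub_mem hxH (H.smul_mem c (hw j).1)
        have hy' := ih (k + 1) (by omega) _ hyH hy
        have hwj : w j ∈ Submodule.span K (w '' {i | k ≤ d i}) :=
          Submodule.subset_span ⟨j, by simp [hdj], rfl⟩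
        have hfin := Submodule.add_mem _ (hmono hy') (Submodule.smul_mem _ c hwj)
        simpa using hfin
      · have heq : H ⊓ ekSub K n (k + 1) = H ⊓ ekSub K n k := by
          by_contra hne'
          exact hkD (by rw [hD]; exact Finset.mem_filter.mpr ⟨Finset.mem_range.mpr hkn, hne'⟩)
        have hx' : x ∈ H ⊓ ekSub K n (k + 1) := by rw [heq]; exact ⟨hxH, hxE⟩
        exact hmono (ih (k + 1) (by omega) x hxH hx'.2)
  -- linear independence
  have hindep : LinearIndependent K w := by
    rw [linearIndependent_iff']
    intro s
    induction s using Finset.strongInduction with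
    | _ s ihs =>
      intro g hg i hi
      have hsne : s.Nonempty := ⟨i, hi⟩
      set j := s.min' hsne with hj
      have hgj : g j = 0 := by
        have h0 := congrFun hg (fd j)
        rw [Finset.sum_apply] at h0
        rw [Finset.sum_eq_single j] at h0
        · simp only [Pi.smul_apply, smul_eq_mul, Pi.zero_apply] at h0
          exact (mul_eq_zero.mp h0).resolve_right (hpivot j)
        · intro i' hi' hne
          have hlt : j < i' := lt_of_le_of_ne (s.min'_le i' hi') (Ne.symm hne)
          simp [hwEgt hlt]
        · intro habs; exact absurd (s.min'_mem hsne) habs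
      rcases eq_or_ne i j with rfl | hij
      · exact hgj
      · have hsub : s.erase j ⊂ s := Finset.erase_ssubset (s.min'_mem hsne)
        have hsum : ∑ i' ∈ s.erase j, g i' • w i' = 0 := by
          rw [Finset.sum_erase_eq_sub (s.min'_mem hsne), hg, hgj]
          simp
        exact ihs _ hsub g hsum i (Finset.mem_erase.mpr ⟨hij, hi⟩)
  -- package into a basis of H
  set w' : Fin (p + 1) → H := fun j => ⟨w j, (hw j).1⟩ with hw'
  have htrans : ∀ (s : Set (Fin (p + 1))) (x : H),
      (x : Fin n → K) ∈ Submodule.span K (w '' s) → x ∈ Submodule.span K (w' '' s) := by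
    intro s x hx
    have h1 : w '' s = H.subtype '' (w' '' s) := by
      rw [Set.image_image]; rfl
    rw [h1, ← Submodule.map_span] at hx
    obtain ⟨y, hy, hyx⟩ := hx
    have hxy : y = x := Subtype.ext hyx
    rwa [hxy] at hy
  have hindep' : LinearIndependent K w' :=
    LinearIndependent.of_comp H.subtype hindep
  have hsp : ⊤ ≤ Submodule.span K (Set.range w') := by
    intro x _
    have hx0 : (x : Fin n → K) ∈ Submodule.span K (w '' {i | 0 ≤ d i}) :=
      hspan n 0 (by omega) x x.2 (fun j hj => absurd hj (by omega))
    have hset : {i : Fin (p + 1) | 0 ≤ d i} = Set.univ := by ext i; simp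
    rw [hset] at hx0
    have := htrans Set.univ x hx0
    rwa [Set.image_univ] at this
  set b : Module.Basis (Fin (p + 1)) K H := Module.Basis.mk hindep' hsp with hb
  have hbw : ∀ j, b j = w' j := fun j => by rw [hb, Module.Basis.mk_apply]
  have hb0 : (b 0 : Fin n → K) = u := by
    rw [hbw 0]
    show w 0 = u
    simp [hwdef]
  refine ⟨H, p, b, hinv, hb0, ?_, ?_⟩
  · -- (i) triangularity
    intro A hA
    obtain ⟨hlow, hdiagAll⟩ := hS A hA
    set lam : K := (A : Matrix (Fin n) (Fin n) K) i0 i0 with hlam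
    have hdiag : ∀ i, (A : Matrix (Fin n) (Fin n) K) i i = lam := fun i => hdiagAll i i0
    set L := (Matrix.mulVecLin (A : Matrix (Fin n) (Fin n) K)).restrict
      (fun x hx => hinv A hA x hx) with hL
    have hkey : ∀ j i : Fin (p + 1), i ≤ j →
        (b.repr (L (b j))) i = if i = j then lam else 0 := by
      intro j i hij
      have hmem : ((L (b j) - lam • b j : H) : Fin n → K) ∈ ekSub K n (d j + 1) := by
        have hco : ((L (b j) - lam • b j : H) : Fin n → K)
            = (A : Matrix (Fin n) (Fin n) K).mulVec (w j) - lam • (w j) := by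
          have h1 : ((L (b j) : H) : Fin n → K)
              = (A : Matrix (Fin n) (Fin n) K).mulVec (w j) := by
            rw [hbw j]; rfl
          have h2 : ((b j : H) : Fin n → K) = w j := by rw [hbw j]
          push_cast [h1, h2]
          rfl
        rw [hco]
        exact ekSub_triangular hlow hdiag (hw j).2.1
      have hspan2 : L (b j) - lam • b j ∈ Submodule.span K (w' '' {i | j < i}) := by
        apply htrans
        have hsp2 := hspan n (d j + 1) (by omega) _ (L (b j) - lam • b j).2 hmem
        have hset : {i : Fin (p + 1) | d j + 1 ≤ d i} = {i | j < i} := by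
          ext i
          simp only [Set.mem_setOf_eq, Nat.succ_le_iff]
          exact hdmono.lt_iff_lt
        rwa [hset] at hsp2
      have hbimg : (⇑b) '' {i | j < i} = w' '' {i | j < i} := by
        apply Set.image_congr'
        intro i; rw [hbw i]
      have hsupp := b.repr_support_subset_of_mem_span {i | j < i}
        (by rw [hbimg]; exact hspan2)
      have hreprr : ∀ i' : Fin (p + 1), ¬ j < i' →
          (b.repr (L (b j) - lam • b j)) i' = 0 := by
        intro i' hi'
        by_contra hne'
        exact hi' (hsupp (Finsupp.mem_support_iff.mpr hne'))
      have hdecomp : L (b j) = lam • b j + (L (b j) - lam • b j) := by abel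
      rw [hdecomp, LinearEquiv.map_add, LinearEquiv.map_smul, Module.Basis.repr_self]
      by_cases hij' : i = j
      · subst hij'
        rw [Finsupp.add_apply, Finsupp.smul_apply, Finsupp.single_eq_same,
          hreprr i (lt_irrefl i), if_pos rfl]
        simp
      · rw [Finsupp.add_apply, Finsupp.smul_apply, Finsupp.single_eq_of_ne hij',
          hreprr i (fun h => hij' (le_antisymm hij (le_of_lt h))), if_neg hij']
        simp
    constructor
    · intro i j hij
      rw [LinearMap.toMatrix_apply]
      rw [hkey j i (le_of_lt hij)]
      simp [ne_of_lt hij]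
    · intro i j
      rw [LinearMap.toMatrix_apply, LinearMap.toMatrix_apply,
        hkey i i le_rfl, hkey j j le_rfl]
      simp
  · -- (ii) boundedness
    have hBcomm : ∀ m, ∀ A ∈ G, (B m : Matrix (Fin n) (Fin n) K) * A = A * B m := by
      intro m A hA
      have h := congrArg (fun M : Matrix.GeneralLinearGroup (Fin n) K =>
        (M : Matrix (Fin n) (Fin n) K)) (hGcomm (B m) (hB m) A hA)
      simpa using h
    have hconv : ∀ x ∈ H, ∃ y,
        Tendsto (fun m => (B m : Matrix (Fin n) (Fin n) K).mulVec x) atTop (𝓝 y) := by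
      intro x hx
      rw [hH] at hx
      induction hx using Submodule.span_induction with
      | mem x hxs =>
        obtain ⟨A, hA, rfl⟩ := hxs
        refine ⟨(A : Matrix (Fin n) (Fin n) K).mulVec v, ?_⟩
        have hcont : Continuous fun y : Fin n → K =>
            (A : Matrix (Fin n) (Fin n) K).mulVec y := by
          exact (Matrix.mulVecLin (A : Matrix (Fin n) (Fin n) K)).continuous_of_finiteDimensional
        have h1 := (hcont.tendsto v).comp hlim
        refine Tendsto.congr (fun m => ?_) h1
        show (A : Matrix (Fin n) (Fin n) K).mulVec ((B m : Matrix (Fin n) (Fin n) K).mulVec u)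
          = (B m : Matrix (Fin n) (Fin n) K).mulVec ((A : Matrix (Fin n) (Fin n) K).mulVec u)
        rw [Matrix.mulVec_mulVec, Matrix.mulVec_mulVec, hBcomm m A hA]
      | zero => exact ⟨0, by simpa [Matrix.mulVec_zero] using
          (tendsto_const_nhds : Tendsto (fun _ : ℕ => (0 : Fin n → K)) atTop _)⟩
      | add x y _ _ ihx ihy =>
        obtain ⟨yx, hyx⟩ := ihx; obtain ⟨yy, hyy⟩ := ihy
        exact ⟨yx + yy, by simpa [Matrix.mulVec_add] using hyx.add hyy⟩
      | smul c x _ ihx =>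
        obtain ⟨y, hy⟩ := ihx
        exact ⟨c • y, by simpa [Matrix.mulVec_smul] using hy.const_smul c⟩
    have hHclosed : IsClosed (H : Set (Fin n → K)) := Submodule.closed_of_finiteDimensional H
    set Lm : ℕ → H →ₗ[K] H := fun m =>
      (Matrix.mulVecLin (B m : Matrix (Fin n) (Fin n) K)).restrict
        (fun x hx => hinv (B m) (hB m) x hx) with hLm
    have hconv' : ∀ x : H, ∃ y : H, Tendsto (fun m => Lm m x) atTop (𝓝 y) := by
      intro x
      obtain ⟨y, hy⟩ := hconv x x.2
      have hyH : y ∈ H := hHclosed.mem_of_tendsto hy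
        (Filter.Eventually.of_forall (fun m => hinv (B m) (hB m) x x.2))
      refine ⟨⟨y, hyH⟩, ?_⟩
      rw [tendsto_subtype_rng]
      exact hy
    have hentry : ∀ i j : Fin (p + 1), ∃ c : ℝ, ∀ m,
        ‖(LinearMap.toMatrix b b (Lm m)) i j‖ ≤ c := by
      intro i j
      obtain ⟨y, hy⟩ := hconv' (b j)
      set φ : H →ₗ[K] K := (Finsupp.lapply i).comp b.repr.toLinearMap with hφ
      have hφc : Continuous φ := φ.continuous_of_finiteDimensional
      have h1 : Tendsto (fun m => φ (Lm m (b j))) atTop (𝓝 (φ y)) := (hφc.tendsto y).comp hy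
      have h2 : Tendsto (fun m => ‖(LinearMap.toMatrix b b (Lm m)) i j‖) atTop (𝓝 ‖φ y‖) := by
        refine (h1.norm).congr (fun m => ?_)
        rw [LinearMap.toMatrix_apply]
        rfl
      obtain ⟨c, hc⟩ := h2.bddAbove_range
      exact ⟨c, fun m => hc (Set.mem_range_self m)⟩
    choose c hc using hentry
    refine ⟨∑ i : Fin (p + 1), ∑ j : Fin (p + 1), max (c i j) 0, ?_⟩
    intro m i j
    have hstep1 : ‖(LinearMap.toMatrix b b (Lm m)) i j‖ ≤ max (c i j) 0 :=
      le_trans (hc i j m) (le_max_left _ _)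
    have hnn : ∀ i' j' : Fin (p + 1), (0 : ℝ) ≤ max (c i' j') 0 := fun _ _ => le_max_right _ _
    have hstep2 : max (c i j) 0 ≤ ∑ j' : Fin (p + 1), max (c i j') 0 :=
      Finset.single_le_sum (fun j' _ => hnn i j') (Finset.mem_univ j)
    have hstep3 : ∑ j' : Fin (p + 1), max (c i j') 0
        ≤ ∑ i' : Fin (p + 1), ∑ j' : Fin (p + 1), max (c i' j') 0 :=
      Finset.single_le_sum
        (fun i' _ => Finset.sum_nonneg (fun j' _ => hnn i' j')) (Finset.mem_univ i)
    exact le_trans hstep1 (le_trans hstep2 hstep3)
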